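/- Let (x,y,z) ∈ 𝓗 with x > 0, z ≥ 0, 0 ≤ y ≤ x, x ≥ √z, and xy ≤ z. Then ℓ_X(x,y,z) = 2⌈z/x⌉ + x − y. -/

import Mathlib

open scoped commutatorElement

/-- The two generators `a, b` of the discrete Heisenberg group. -/
inductive HGen : Type
  | a | b
deriving DecidableEq

/-- Relators of the discrete Heisenberg group `⟨a,b ∣ [a,[a,b]] = [b,[a,b]] = 1⟩`. -/
def Hrels : Set (FreeGroup HGen) :=
  { ⁅FreeGroup.of HGen.a, ⁅FreeGroup.of HGen.a, FreeGroup.of HGen.b⁆⁆,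
    ⁅FreeGroup.of HGen.b, ⁅FreeGroup.of HGen.a, FreeGroup.of HGen.b⁆⁆ }

/-- The discrete Heisenberg group `𝓗`. -/
abbrev Heis : Type := PresentedGroup Hrels

/-- The generator `a` of `𝓗`. -/
def Ha : Heis := PresentedGroup.of HGen.a

/-- The generator `b` of `𝓗`. -/
def Hb : Heis := PresentedGroup.of HGen.b

/-- The four letters of the alphabet `X = {a, a⁻¹, b, b⁻¹}`. -/
inductive XLetter : Type
  | a | A | b | B
deriving DecidableEq

/-- The element of `𝓗` represented by a letter of `X`. -/
def XLetter.toH : XLetter → Heis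
  | .a => Ha
  | .A => Ha⁻¹
  | .b => Hb
  | .B => Hb⁻¹

/-- The element of `𝓗` represented by a word over `X`. -/
def evalX (w : List XLetter) : Heis := (w.map XLetter.toH).prod

/-- The word `a^k` over `X`, for `k ∈ ℤ`. -/
def apow (k : ℤ) : List XLetter :=
  if 0 ≤ k then List.replicate k.toNat XLetter.a else List.replicate (-k).toNat XLetter.A

/-- The word `b^k` over `X`, for `k ∈ ℤ`. -/
def bpow (k : ℤ) : List XLetter :=
  if 0 ≤ k then List.replicate k.toNat XLetter.b else List.replicate (-k).toNat XLetter.B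

/-- The element `(x,y,z)` of `𝓗`, i.e. the element with normal form `[a,b]^z b^y a^x`. -/
def hElt (x y z : ℤ) : Heis := ⁅Ha, Hb⁆ ^ z * Hb ^ y * Ha ^ x

/-- The word length `ℓ_X(g)` of `g ∈ 𝓗` with respect to `X`. -/
noncomputable def lenX (g : Heis) : ℕ :=
  sInf { n | ∃ w : List XLetter, evalX w = g ∧ w.length = n }

/-- A word over `X` is geodesic if its length equals the word length of the
element it represents. -/
def IsGeodesicX (w : List XLetter) : Prop := w.length = lenX (evalX w)

-- ## Relations in Heis

lemma Heis_rel1 : ⁅Ha, ⁅Ha, Hb⁆⁆ = 1 := by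
  have h : (⁅FreeGroup.of HGen.a, ⁅FreeGroup.of HGen.a, FreeGroup.of HGen.b⁆⁆ :
      FreeGroup HGen) ∈ Subgroup.normalClosure Hrels :=
    Subgroup.subset_normalClosure (Set.mem_insert _ _)
  calc ⁅Ha, ⁅Ha, Hb⁆⁆
      = PresentedGroup.mk Hrels
          ⁅FreeGroup.of HGen.a, ⁅FreeGroup.of HGen.a, FreeGroup.of HGen.b⁆⁆ := by
        simp only [Ha, Hb, PresentedGroup.of, map_commutatorElement]
    _ = 1 := (QuotientGroup.eq_one_iff _).mpr h

lemma Heis_rel2 : ⁅Hb, ⁅Ha, Hb⁆⁆ = 1 := by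
  have h : (⁅FreeGroup.of HGen.b, ⁅FreeGroup.of HGen.a, FreeGroup.of HGen.b⁆⁆ :
      FreeGroup HGen) ∈ Subgroup.normalClosure Hrels :=
    Subgroup.subset_normalClosure (Set.mem_insert_of_mem _ rfl)
  calc ⁅Hb, ⁅Ha, Hb⁆⁆
      = PresentedGroup.mk Hrels
          ⁅FreeGroup.of HGen.b, ⁅FreeGroup.of HGen.a, FreeGroup.of HGen.b⁆⁆ := by
        simp only [Ha, Hb, PresentedGroup.of, map_commutatorElement]
    _ = 1 := (QuotientGroup.eq_one_iff _).mpr h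

lemma commute_c_Ha : Commute (⁅Ha, Hb⁆) Ha :=
  (commutatorElement_eq_one_iff_commute.mp Heis_rel1).symm

lemma commute_c_Hb : Commute (⁅Ha, Hb⁆) Hb :=
  (commutatorElement_eq_one_iff_commute.mp Heis_rel2).symm

lemma h_ab : Ha * Hb = ⁅Ha, Hb⁆ * Hb * Ha := by group

section KeyAlgebra

variable {G : Type*} [Group G]

lemma inv_step {a b c : G} (h : a * b = c * b * a) (hca : Commute c a) :
    a⁻¹ * b = c⁻¹ * b * a⁻¹ := by
  have h3 : b * a⁻¹ = a⁻¹ * c * b := by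
    calc b * a⁻¹ = a⁻¹ * (a * b) * a⁻¹ := by group
      _ = a⁻¹ * (c * b * a) * a⁻¹ := by rw [h]
      _ = a⁻¹ * c * b := by group
  have h4 : a⁻¹ * c = c * a⁻¹ := hca.inv_right.eq.symm
  calc a⁻¹ * b = c⁻¹ * (c * a⁻¹ * b) := by group
    _ = c⁻¹ * (a⁻¹ * c * b) := by rw [← h4]
    _ = c⁻¹ * (b * a⁻¹) := by rw [← h3]
    _ = c⁻¹ * b * a⁻¹ := by group

lemma inv_step2 {a b c : G} (h : a * b = c * b * a) (hcb : Commute c b) :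
    a * b⁻¹ = c⁻¹ * b⁻¹ * a := by
  have h3 : b * (a * b⁻¹) = c⁻¹ * a := by
    calc b * (a * b⁻¹) = c⁻¹ * ((c * b * a) * b⁻¹) := by group
      _ = c⁻¹ * ((a * b) * b⁻¹) := by rw [← h]
      _ = c⁻¹ * a := by group
  calc a * b⁻¹ = b⁻¹ * (b * (a * b⁻¹)) := by group
    _ = b⁻¹ * (c⁻¹ * a) := by rw [h3]
    _ = (b⁻¹ * c⁻¹) * a := by group
    _ = (c⁻¹ * b⁻¹) * a := by rw [← hcb.inv_inv.eq]
    _ = c⁻¹ * b⁻¹ * a := by group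

lemma key1 {a b c : G} (h : a * b = c * b * a) (hca : Commute c a) :
    ∀ m : ℤ, a ^ m * b = c ^ m * b * a ^ m := by
  intro m
  induction m using Int.induction_on with
  | zero => simp
  | succ k ih =>
    calc a ^ ((k : ℤ) + 1) * b = a ^ (k : ℤ) * (a * b) := by group
      _ = a ^ (k : ℤ) * (c * b * a) := by rw [h]
      _ = (a ^ (k : ℤ) * c) * (b * a) := by group
      _ = (c * a ^ (k : ℤ)) * (b * a) := by rw [← (hca.zpow_right (k : ℤ)).eq]
      _ = c * (a ^ (k : ℤ) * b) * a := by group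
      _ = c * (c ^ (k : ℤ) * b * a ^ (k : ℤ)) * a := by rw [ih]
      _ = c ^ ((k : ℤ) + 1) * b * a ^ ((k : ℤ) + 1) := by group
  | pred k ih =>
    have h' : a⁻¹ * b = c⁻¹ * b * a⁻¹ := inv_step h hca
    calc a ^ (-(k : ℤ) - 1) * b = a ^ (-(k : ℤ)) * (a⁻¹ * b) := by group
      _ = a ^ (-(k : ℤ)) * (c⁻¹ * b * a⁻¹) := by rw [h']
      _ = (a ^ (-(k : ℤ)) * c⁻¹) * (b * a⁻¹) := by group
      _ = (c⁻¹ * a ^ (-(k : ℤ))) * (b * a⁻¹) := by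
            rw [← (hca.inv_left.zpow_right (-(k : ℤ))).eq]
      _ = c⁻¹ * (a ^ (-(k : ℤ)) * b) * a⁻¹ := by group
      _ = c⁻¹ * (c ^ (-(k : ℤ)) * b * a ^ (-(k : ℤ))) * a⁻¹ := by rw [ih]
      _ = c ^ (-(k : ℤ) - 1) * b * a ^ (-(k : ℤ) - 1) := by group

lemma key2 {A b C : G} (h : A * b = C * b * A) (hCb : Commute C b) :
    ∀ n : ℤ, A * b ^ n = C ^ n * b ^ n * A := by
  intro n
  induction n using Int.induction_on with
  | zero => simp
  | succ k ih =>
    calc A * b ^ ((k : ℤ) + 1) = (A * b ^ (k : ℤ)) * b := by group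
      _ = (C ^ (k : ℤ) * b ^ (k : ℤ) * A) * b := by rw [ih]
      _ = C ^ (k : ℤ) * (b ^ (k : ℤ) * (A * b)) := by group
      _ = C ^ (k : ℤ) * (b ^ (k : ℤ) * (C * b * A)) := by rw [h]
      _ = C ^ (k : ℤ) * ((b ^ (k : ℤ) * C) * (b * A)) := by group
      _ = C ^ (k : ℤ) * ((C * b ^ (k : ℤ)) * (b * A)) := by
            rw [(hCb.zpow_right (k : ℤ)).eq]
      _ = C ^ ((k : ℤ) + 1) * b ^ ((k : ℤ) + 1) * A := by group
  | pred k ih =>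
    have h' : A * b⁻¹ = C⁻¹ * b⁻¹ * A := inv_step2 h hCb
    calc A * b ^ (-(k : ℤ) - 1) = (A * b ^ (-(k : ℤ))) * b⁻¹ := by group
      _ = (C ^ (-(k : ℤ)) * b ^ (-(k : ℤ)) * A) * b⁻¹ := by rw [ih]
      _ = C ^ (-(k : ℤ)) * (b ^ (-(k : ℤ)) * (A * b⁻¹)) := by group
      _ = C ^ (-(k : ℤ)) * (b ^ (-(k : ℤ)) * (C⁻¹ * b⁻¹ * A)) := by rw [h']
      _ = C ^ (-(k : ℤ)) * ((b ^ (-(k : ℤ)) * C⁻¹) * (b⁻¹ * A)) := by group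
      _ = C ^ (-(k : ℤ)) * ((C⁻¹ * b ^ (-(k : ℤ))) * (b⁻¹ * A)) := by
            rw [(hCb.inv_left.zpow_right (-(k : ℤ))).eq]
      _ = C ^ (-(k : ℤ) - 1) * b ^ (-(k : ℤ) - 1) * A := by group

lemma key {a b c : G} (h : a * b = c * b * a) (hca : Commute c a) (hcb : Commute c b)
    (m n : ℤ) : a ^ m * b ^ n = c ^ (m * n) * b ^ n * a ^ m := by
  rw [key2 (key1 h hca m) (hcb.zpow_left m) n, zpow_mul]

end KeyAlgebra

-- ## Multiplication rule for normal forms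

lemma hElt_mul (x1 y1 z1 x2 y2 z2 : ℤ) :
    hElt x1 y1 z1 * hElt x2 y2 z2 = hElt (x1 + x2) (y1 + y2) (z1 + z2 + x1 * y2) := by
  have hca := commute_c_Ha
  have hcb := commute_c_Hb
  set a := Ha
  set b := Hb
  set c := ⁅Ha, Hb⁆ with hc
  have e1 : a ^ x1 * c ^ z2 = c ^ z2 * a ^ x1 := ((hca.zpow_zpow z2 x1).eq).symm
  have e2 : a ^ x1 * b ^ y2 = c ^ (x1 * y2) * b ^ y2 * a ^ x1 := key h_ab hca hcb x1 y2
  have e4 : b ^ y1 * c ^ z2 = c ^ z2 * b ^ y1 := ((hcb.zpow_zpow z2 y1).eq).symm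
  have e5 : b ^ y1 * c ^ (x1 * y2) = c ^ (x1 * y2) * b ^ y1 := ((hcb.zpow_zpow _ y1).eq).symm
  show c ^ z1 * b ^ y1 * a ^ x1 * (c ^ z2 * b ^ y2 * a ^ x2)
      = c ^ (z1 + z2 + x1 * y2) * b ^ (y1 + y2) * a ^ (x1 + x2)
  calc c ^ z1 * b ^ y1 * a ^ x1 * (c ^ z2 * b ^ y2 * a ^ x2)
      = c ^ z1 * (b ^ y1 * ((a ^ x1 * c ^ z2) * (b ^ y2 * a ^ x2))) := by group
    _ = c ^ z1 * (b ^ y1 * ((c ^ z2 * a ^ x1) * (b ^ y2 * a ^ x2))) := by rw [e1]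
    _ = c ^ z1 * ((b ^ y1 * c ^ z2) * ((a ^ x1 * b ^ y2) * a ^ x2)) := by group
    _ = c ^ z1 * ((c ^ z2 * b ^ y1) * ((a ^ x1 * b ^ y2) * a ^ x2)) := by rw [e4]
    _ = c ^ z1 * ((c ^ z2 * b ^ y1) * ((c ^ (x1 * y2) * b ^ y2 * a ^ x1) * a ^ x2)) := by
          rw [e2]
    _ = (c ^ z1 * c ^ z2) * ((b ^ y1 * c ^ (x1 * y2)) * (b ^ y2 * (a ^ x1 * a ^ x2))) := by
          group
    _ = (c ^ z1 * c ^ z2) * ((c ^ (x1 * y2) * b ^ y1) * (b ^ y2 * (a ^ x1 * a ^ x2))) := by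
          rw [e5]
    _ = c ^ (z1 + z2 + x1 * y2) * b ^ (y1 + y2) * a ^ (x1 + x2) := by group

lemma hElt_a (k : ℤ) : hElt k 0 0 = Ha ^ k := by simp [hElt]
lemma hElt_b (k : ℤ) : hElt 0 k 0 = Hb ^ k := by simp [hElt]

-- ## evalX lemmas

lemma evalX_append (u v : List XLetter) : evalX (u ++ v) = evalX u * evalX v := by
  simp [evalX]

lemma evalX_apow (k : ℤ) : evalX (apow k) = Ha ^ k := by
  unfold apow
  split_ifs with h
  · simp [evalX, List.map_replicate, List.prod_replicate, XLetter.toH]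
    rw [← zpow_natCast, Int.toNat_of_nonneg h]
  · simp [evalX, List.map_replicate, List.prod_replicate, XLetter.toH]
    rw [← zpow_natCast, Int.toNat_of_nonneg (by omega : (0:ℤ) ≤ -k)]
    simp [zpow_neg]

lemma evalX_bpow (k : ℤ) : evalX (bpow k) = Hb ^ k := by
  unfold bpow
  split_ifs with h
  · simp [evalX, List.map_replicate, List.prod_replicate, XLetter.toH]
    rw [← zpow_natCast, Int.toNat_of_nonneg h]
  · simp [evalX, List.map_replicate, List.prod_replicate, XLetter.toH]
    rw [← zpow_natCast, Int.toNat_of_nonneg (by omega : (0:ℤ) ≤ -k)]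
    simp [zpow_neg]

lemma apow_length (k : ℤ) : (apow k).length = k.natAbs := by
  unfold apow; split_ifs with h <;> simp <;> omega

lemma bpow_length (k : ℤ) : (bpow k).length = k.natAbs := by
  unfold bpow; split_ifs with h <;> simp <;> omega

structure HM where
  x : ℤ
  y : ℤ
  z : ℤ

namespace HM

@[ext] lemma ext' {g h : HM} (hx : g.x = h.x) (hy : g.y = h.y) (hz : g.z = h.z) : g = h := by
  cases g; cases h; simp_all

instance : Mul HM := ⟨fun g h => ⟨g.x + h.x, g.y + h.y, g.z + h.z + g.x * h.y⟩⟩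
instance : One HM := ⟨⟨0, 0, 0⟩⟩
instance : Inv HM := ⟨fun g => ⟨-g.x, -g.y, -g.z + g.x * g.y⟩⟩

@[simp] lemma mul_x (g h : HM) : (g * h).x = g.x + h.x := rfl
@[simp] lemma mul_y (g h : HM) : (g * h).y = g.y + h.y := rfl
@[simp] lemma mul_z (g h : HM) : (g * h).z = g.z + h.z + g.x * h.y := rfl
@[simp] lemma inv_x (g : HM) : (g⁻¹).x = -g.x := rfl
@[simp] lemma inv_y (g : HM) : (g⁻¹).y = -g.y := rfl
@[simp] lemma inv_z (g : HM) : (g⁻¹).z = -g.z + g.x * g.y := rfl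
@[simp] lemma one_x : (1 : HM).x = 0 := rfl
@[simp] lemma one_y : (1 : HM).y = 0 := rfl
@[simp] lemma one_z : (1 : HM).z = 0 := rfl

instance : Group HM where
  mul_assoc g h k := by apply ext' <;> simp <;> ring
  one_mul g := by apply ext' <;> simp
  mul_one g := by apply ext' <;> simp
  inv_mul_cancel g := by apply ext' <;> simp

def aM : HM := ⟨1, 0, 0⟩
def bM : HM := ⟨0, 1, 0⟩
def cM : HM := ⟨0, 0, 1⟩

lemma comm_ab : ⁅aM, bM⁆ = cM := by
  show aM * bM * aM⁻¹ * bM⁻¹ = _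
  apply ext' <;> simp [aM, bM, cM]

lemma aM_zpow (n : ℤ) : aM ^ n = ⟨n, 0, 0⟩ := by
  induction n using Int.induction_on with
  | zero => rfl
  | succ k ih => rw [zpow_add_one, ih]; apply ext' <;> simp [aM]
  | pred k ih => rw [zpow_sub_one, ih]; apply ext' <;> simp [aM] <;> omega

lemma bM_zpow (n : ℤ) : bM ^ n = ⟨0, n, 0⟩ := by
  induction n using Int.induction_on with
  | zero => rfl
  | succ k ih => rw [zpow_add_one, ih]; apply ext' <;> simp [bM]
  | pred k ih => rw [zpow_sub_one, ih]; apply ext' <;> simp [bM] <;> omega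

lemma cM_zpow (n : ℤ) : cM ^ n = ⟨0, 0, n⟩ := by
  induction n using Int.induction_on with
  | zero => rfl
  | succ k ih => rw [zpow_add_one, ih]; apply ext' <;> simp [cM]
  | pred k ih => rw [zpow_sub_one, ih]; apply ext' <;> simp [cM] <;> omega

end HM

namespace HM

lemma commute_a_c : Commute aM cM := by
  show aM * cM = cM * aM
  apply ext' <;> simp [aM, cM]

lemma commute_b_c : Commute bM cM := by
  show bM * cM = cM * bM
  apply ext' <;> simp [bM, cM]

end HM

def fHM : HGen → HM
  | .a => HM.aM
  | .b => HM.bM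

lemma fHM_rels : ∀ r ∈ Hrels, FreeGroup.lift fHM r = 1 := by
  intro r hr
  simp only [Hrels, Set.mem_insert_iff, Set.mem_singleton_iff] at hr
  rcases hr with rfl | rfl
  · simp only [map_commutatorElement, FreeGroup.lift_apply_of, fHM]
    rw [HM.comm_ab]
    exact commutatorElement_eq_one_iff_commute.mpr HM.commute_a_c
  · simp only [map_commutatorElement, FreeGroup.lift_apply_of, fHM]
    rw [HM.comm_ab]
    exact commutatorElement_eq_one_iff_commute.mpr HM.commute_b_c

def phiH : Heis →* HM := PresentedGroup.toGroup fHM_rels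

@[simp] lemma phiH_a : phiH Ha = HM.aM := PresentedGroup.toGroup.of fHM_rels

@[simp] lemma phiH_b : phiH Hb = HM.bM := PresentedGroup.toGroup.of fHM_rels

lemma phiH_c : phiH ⁅Ha, Hb⁆ = HM.cM := by
  rw [map_commutatorElement, phiH_a, phiH_b, HM.comm_ab]

lemma phiH_hElt (x y z : ℤ) : phiH (hElt x y z) = ⟨x, y, z⟩ := by
  rw [hElt, map_mul, map_mul, map_zpow, map_zpow, map_zpow, phiH_c, phiH_a, phiH_b,
    HM.aM_zpow, HM.bM_zpow, HM.cM_zpow]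
  apply HM.ext' <;> simp

-- ## Word statistics

def XLetter.dy : XLetter → ℤ
  | .b => 1
  | .B => -1
  | _ => 0

def Xr (u : List XLetter) : ℤ := (u.count .a : ℤ) - u.count .A
def Yr (u : List XLetter) : ℤ := (u.count .b : ℤ) - u.count .B

def Zr : List XLetter → ℤ
  | [] => 0
  | l :: u => Zr u + Xr u * l.dy

def Mr : List XLetter → ℤ
  | [] => 0
  | l :: u => max (Xr (l :: u)) (Mr u)

def mr : List XLetter → ℤ
  | [] => 0
  | l :: u => min (Xr (l :: u)) (mr u)

lemma Xr_le_Mr : ∀ u : List XLetter, Xr u ≤ Mr u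
  | [] => le_refl 0
  | _ :: _ => le_max_left _ _

lemma Mr_nonneg : ∀ u : List XLetter, 0 ≤ Mr u
  | [] => le_refl 0
  | _ :: u => le_trans (Mr_nonneg u) (le_max_right _ _)

lemma mr_le_Xr : ∀ u : List XLetter, mr u ≤ Xr u
  | [] => le_refl 0
  | _ :: _ => min_le_left _ _

lemma mr_nonpos : ∀ u : List XLetter, mr u ≤ 0
  | [] => le_refl 0
  | _ :: u => le_trans (min_le_right _ _) (mr_nonpos u)

lemma Xr_cons (l : XLetter) (u : List XLetter) :
    Xr (l :: u) = Xr u + ((if l = .a then 1 else 0) - (if l = .A then 1 else 0)) := by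
  cases l <;> simp [Xr, List.count_cons] <;> push_cast <;> ring

lemma Mr_le_count (u : List XLetter) : Mr u ≤ (u.count .a : ℤ) := by
  induction u with
  | nil => simp [Mr]
  | cons l u ih =>
    have h1 : Xr (l :: u) ≤ ((l :: u).count .a : ℤ) := by
      simp only [Xr]; have := Int.ofNat_nonneg ((l :: u).count XLetter.A); omega
    have h2 : (u.count .a : ℤ) ≤ ((l :: u).count .a : ℤ) := by
      cases l <;> simp [List.count_cons]
    simp only [Mr]
    omega

lemma neg_mr_le_count (u : List XLetter) : -mr u ≤ (u.count .A : ℤ) := by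
  induction u with
  | nil => simp [mr]
  | cons l u ih =>
    have h1 : -Xr (l :: u) ≤ ((l :: u).count .A : ℤ) := by
      simp only [Xr]; have := Int.ofNat_nonneg ((l :: u).count XLetter.a); omega
    have h2 : (u.count .A : ℤ) ≤ ((l :: u).count .A : ℤ) := by
      cases l <;> simp [List.count_cons]
    simp only [mr]
    omega

lemma length_eq_counts (u : List XLetter) :
    u.length = u.count .a + u.count .A + u.count .b + u.count .B := by
  induction u with
  | nil => simp
  | cons l u ih => cases l <;> simp [List.count_cons, ih] <;> omega

lemma count_cons_ne (l l' : XLetter) (u : List XLetter) (h : l ≠ l') :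
    (l :: u).count l' = u.count l' := by
  rw [List.count_cons, if_neg (by simpa using h)]
  omega

lemma count_cons_self' (l : XLetter) (u : List XLetter) :
    (l :: u).count l = u.count l + 1 := by
  rw [List.count_cons, if_pos (by simp)]

lemma Zr_le (u : List XLetter) :
    Zr u ≤ Mr u * (u.count .b : ℤ) + (-mr u) * (u.count .B : ℤ) := by
  induction u with
  | nil => simp [Zr, Mr, mr]
  | cons l u ih =>
    have hXM := Xr_le_Mr u
    have hmX := mr_le_Xr u
    have hsn : (0:ℤ) ≤ u.count .b := Int.ofNat_nonneg _
    have htn : (0:ℤ) ≤ u.count .B := Int.ofNat_nonneg _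
    have hMM : Mr u ≤ Mr (l :: u) := le_max_right _ _
    have hmm : mr (l :: u) ≤ mr u := min_le_right _ _
    have e1 : Mr u * (u.count .b : ℤ) ≤ Mr (l :: u) * (u.count .b : ℤ) :=
      mul_le_mul_of_nonneg_right hMM hsn
    have e2 : (-mr u) * (u.count .B : ℤ) ≤ (-mr (l :: u)) * (u.count .B : ℤ) :=
      mul_le_mul_of_nonneg_right (by omega) htn
    cases l
    · -- a
      rw [count_cons_ne _ _ _ (by decide), count_cons_ne _ _ _ (by decide)]
      show Zr u + Xr u * XLetter.dy .a ≤ _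
      simp only [XLetter.dy]
      linarith
    · -- A
      rw [count_cons_ne _ _ _ (by decide), count_cons_ne _ _ _ (by decide)]
      show Zr u + Xr u * XLetter.dy .A ≤ _
      simp only [XLetter.dy]
      linarith
    · -- b
      have hMr : Mr (XLetter.b :: u) = Mr u := by
        simp only [Mr]
        rw [max_eq_right]
        rw [Xr_cons]; simp; omega
      have hmr : mr (XLetter.b :: u) = mr u := by
        simp only [mr]
        rw [min_eq_right]
        rw [Xr_cons]; simp; omega
      rw [count_cons_self', count_cons_ne _ _ _ (by decide), hMr, hmr]
      show Zr u + Xr u * XLetter.dy .b ≤ _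
      simp only [XLetter.dy]
      push_cast
      nlinarith [Mr_nonneg u]
    · -- B
      have hMr : Mr (XLetter.B :: u) = Mr u := by
        simp only [Mr]
        rw [max_eq_right]
        rw [Xr_cons]; simp; omega
      have hmr : mr (XLetter.B :: u) = mr u := by
        simp only [mr]
        rw [min_eq_right]
        rw [Xr_cons]; simp; omega
      rw [count_cons_ne _ _ _ (by decide), count_cons_self', hMr, hmr]
      show Zr u + Xr u * XLetter.dy .B ≤ _
      simp only [XLetter.dy]
      push_cast
      nlinarith [mr_nonpos u]

lemma count_A_ge (u : List XLetter) :
    Mr u + (-(mr u)) - max (Xr u) 0 ≤ (u.count .A : ℤ) := by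
  induction u with
  | nil => simp [Mr, mr, Xr]
  | cons l u ih =>
    have hμA := neg_mr_le_count u
    have hXM := Xr_le_Mr u
    have hmX := mr_le_Xr u
    have hM0 := Mr_nonneg u
    have hm0 := mr_nonpos u
    cases l
    · -- a
      rw [count_cons_ne _ _ _ (by decide)]
      simp only [Mr, mr, Xr_cons]
      simp
      omega
    · -- A
      rw [count_cons_self']
      simp only [Mr, mr, Xr_cons]
      simp
      push_cast
      omega
    · -- b
      rw [count_cons_ne _ _ _ (by decide)]
      simp only [Mr, mr, Xr_cons]
      simp
      omega
    · -- B
      rw [count_cons_ne _ _ _ (by decide)]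
      simp only [Mr, mr, Xr_cons]
      simp
      omega

lemma phiH_evalX_reverse (u : List XLetter) :
    phiH (evalX u.reverse) = ⟨Xr u, Yr u, Zr u⟩ := by
  induction u with
  | nil =>
    rw [List.reverse_nil, show evalX [] = 1 from rfl, map_one]
    apply HM.ext' <;> simp [Xr, Yr, Zr]
  | cons l u ih =>
    rw [List.reverse_cons, evalX_append, map_mul, ih,
      show evalX [l] = l.toH by simp [evalX]]
    have hZ : Zr (l :: u) = Zr u + Xr u * l.dy := rfl
    cases l
    · have c1 := count_cons_self' .a u
      have c2 := count_cons_ne .a .A u (by decide)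
      have c3 := count_cons_ne .a .b u (by decide)
      have c4 := count_cons_ne .a .B u (by decide)
      rw [show (XLetter.a).toH = Ha from rfl, phiH_a]
      apply HM.ext' <;> simp [HM.aM, Xr, Yr, hZ, XLetter.dy, c1, c2, c3, c4] <;>
        push_cast <;> ring
    · have c1 := count_cons_ne .A .a u (by decide)
      have c2 := count_cons_self' .A u
      have c3 := count_cons_ne .A .b u (by decide)
      have c4 := count_cons_ne .A .B u (by decide)
      rw [show (XLetter.A).toH = Ha⁻¹ from rfl, map_inv, phiH_a]
      apply HM.ext' <;> simp [HM.aM, Xr, Yr, hZ, XLetter.dy, c1, c2, c3, c4] <;>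
        push_cast <;> ring
    · have c1 := count_cons_ne .b .a u (by decide)
      have c2 := count_cons_ne .b .A u (by decide)
      have c3 := count_cons_self' .b u
      have c4 := count_cons_ne .b .B u (by decide)
      rw [show (XLetter.b).toH = Hb from rfl, phiH_b]
      apply HM.ext' <;> simp [HM.bM, Xr, Yr, hZ, XLetter.dy, c1, c2, c3, c4] <;>
        push_cast <;> ring
    · have c1 := count_cons_ne .B .a u (by decide)
      have c2 := count_cons_ne .B .A u (by decide)
      have c3 := count_cons_ne .B .b u (by decide)
      have c4 := count_cons_self' .B u
      rw [show (XLetter.B).toH = Hb⁻¹ from rfl, map_inv, phiH_b]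
      apply HM.ext' <;> simp [HM.bM, Xr, Yr, hZ, XLetter.dy, c1, c2, c3, c4] <;>
        push_cast <;> ring

lemma apow_length' (k : ℤ) (h : 0 ≤ k) : (apow k).length = k.toNat := by
  unfold apow; rw [if_pos h]; simp

lemma bpow_length' (k : ℤ) (h : 0 ≤ k) : (bpow k).length = k.toNat := by
  unfold bpow; rw [if_pos h]; simp

lemma bpow_length_neg (k : ℤ) (h : k < 0) : (bpow k).length = (-k).toNat := by
  unfold bpow; rw [if_neg (by omega)]; simp

lemma arith_aux (x z m s t M μ : ℤ) (hm0 : 0 ≤ m) (hs0 : 0 ≤ s)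
    (hts : t ≤ s) (hμ0 : 0 ≤ μ) (hMle : M ≤ x + m - μ) (hzb : z ≤ M * s + μ * t)
    (hsx : s ≤ x) : z ≤ (m + s) * x := by
  nlinarith [mul_le_mul_of_nonneg_right hMle hs0, mul_nonneg hμ0 (sub_nonneg.mpr hts),
    mul_nonneg hm0 (sub_nonneg.mpr hsx)]


/-- If `x > 0`, `z ≥ 0`, `0 ≤ y ≤ x`, `x ≥ √z` and `xy ≤ z`, then
`ℓ_X(x,y,z) = 2⌈z/x⌉ + x − y`. -/
theorem lenX_case_I22 (x y z : ℤ) (hx : 0 < x) (hz : 0 ≤ z) (hy0 : 0 ≤ y) (hyx : y ≤ x)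
    (hsqrt : Real.sqrt z ≤ (x : ℝ)) (hxy : x * y ≤ z) :
    (lenX (hElt x y z) : ℤ) = 2 * ⌈(z : ℚ) / (x : ℚ)⌉ + x - y := by
  have hzR : (z : ℝ) ≤ (x : ℝ) * x := by
    have h1 : Real.sqrt z * Real.sqrt z ≤ (x : ℝ) * x :=
      mul_self_le_mul_self (Real.sqrt_nonneg _) hsqrt
    rwa [Real.mul_self_sqrt (by exact_mod_cast hz)] at h1
  have hzx2 : z ≤ x * x := by exact_mod_cast hzR
  set q : ℤ := ⌈(z : ℚ) / (x : ℚ)⌉ with hqdef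
  have hxQ : (0 : ℚ) < (x : ℚ) := by exact_mod_cast hx
  have hq1 : z ≤ q * x := by
    have h := Int.le_ceil ((z : ℚ) / (x : ℚ))
    rw [div_le_iff₀ hxQ] at h
    rw [hqdef]
    exact_mod_cast h
  have hq2 : (q - 1) * x < z := by
    have h := Int.ceil_lt_add_one ((z : ℚ) / (x : ℚ))
    have h2 : ((⌈(z : ℚ) / (x : ℚ)⌉ : ℚ) - 1) < (z : ℚ) / (x : ℚ) := by linarith [h]
    rw [lt_div_iff₀ hxQ] at h2
    rw [hqdef]
    exact_mod_cast h2
  have hqx : q ≤ x := by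
    rw [hqdef]
    apply Int.ceil_le.mpr
    rw [div_le_iff₀ hxQ]
    exact_mod_cast hzx2
  have hq0 : 0 ≤ q := by
    rw [hqdef]
    exact Int.ceil_nonneg (div_nonneg (by exact_mod_cast hz) (le_of_lt hxQ))
  have hqy : y ≤ q := by nlinarith [hq1, hxy]
  set N : ℤ := 2 * q + x - y with hNdef
  have hN0 : 0 ≤ N := by omega
  have hup : ∃ W : List XLetter, evalX W = hElt x y z ∧ (W.length : ℤ) = N := by
    rcases eq_or_lt_of_le hz with hz0 | hzpos
    · have hz0' : z = 0 := hz0.symm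
      have hq0' : q = 0 := by nlinarith [hq1, hq2]
      have hy0' : y = 0 := by nlinarith [hxy]
      refine ⟨apow x, ?_, ?_⟩
      · rw [evalX_apow, ← hElt_a, hy0', hz0']
      · rw [apow_length]; omega
    · have hq1' : 1 ≤ q := by nlinarith [hq1]
      set r : ℤ := q * x - z with hrdef
      have hr0 : 0 ≤ r := by simp [hrdef]; linarith
      have hrx : r < x := by simp [hrdef]; nlinarith [hq2]
      refine ⟨bpow (y - q) ++ (apow (x - r) ++ (bpow 1 ++ (apow r ++ bpow (q - 1)))), ?_, ?_⟩
      · rw [evalX_append, evalX_append, evalX_append, evalX_append,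
          evalX_apow, evalX_apow, evalX_bpow, evalX_bpow, evalX_bpow,
          ← hElt_a, ← hElt_a, ← hElt_b, ← hElt_b, ← hElt_b]
        simp only [hElt_mul]
        have e : ∀ {a b c a' b' c' : ℤ}, a = a' → b = b' → c = c' →
            hElt a b c = hElt a' b' c' := by
          rintro a b c a' b' c' rfl rfl rfl; rfl
        exact e (by ring) (by ring) (by rw [hrdef]; ring)
      · have hby : (bpow (y - q)).length = (q - y).toNat := by
          rcases eq_or_lt_of_le hqy with hyq | hyq
          · rw [← hyq, sub_self, show bpow 0 = [] from rfl]
            simp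
          · rw [bpow_length_neg _ (by linarith)]
            congr 1
            ring
        rw [List.length_append, List.length_append, List.length_append, List.length_append,
          hby, apow_length' (x - r) (by linarith), bpow_length' 1 (by norm_num),
          apow_length' r hr0, bpow_length' (q - 1) (by linarith)]
        omega
  have hlow : ∀ n ∈ {n | ∃ w : List XLetter, evalX w = hElt x y z ∧ w.length = n},
      N.toNat ≤ n := by
    rintro n ⟨w, hw, rfl⟩
    have hrev : w.reverse.reverse = w := List.reverse_reverse w
    have heval := phiH_evalX_reverse w.reverse
    rw [hrev, hw, phiH_hElt] at heval
    simp only [HM.mk.injEq] at heval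
    obtain ⟨hx', hy', hz'⟩ := heval
    have hinv := count_A_ge w.reverse
    have hzb := Zr_le w.reverse
    have hmr0 := mr_nonpos w.reverse
    have hXr : Xr w.reverse = (w.reverse.count .a : ℤ) - w.reverse.count .A := rfl
    have hYr : Yr w.reverse = (w.reverse.count .b : ℤ) - w.reverse.count .B := rfl
    have hlen : (w.length : ℤ) = (w.reverse.count .a : ℤ) + w.reverse.count .A
        + w.reverse.count .b + w.reverse.count .B := by
      rw [← List.length_reverse, length_eq_counts w.reverse]
      push_cast
      ring
    have hm0 : (0:ℤ) ≤ w.reverse.count .A := Int.natCast_nonneg _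
    have hs0 : (0:ℤ) ≤ w.reverse.count .b := Int.natCast_nonneg _
    have ht0 : (0:ℤ) ≤ w.reverse.count .B := Int.natCast_nonneg _
    have hts : (w.reverse.count .B : ℤ) ≤ w.reverse.count .b := by omega
    have hMle : Mr w.reverse ≤ x + (w.reverse.count .A : ℤ) - (-(mr w.reverse)) := by omega
    have hkey : q ≤ (w.reverse.count .A : ℤ) + w.reverse.count .b := by
      rcases le_or_gt ((w.reverse.count .b : ℤ)) x with hsx | hsx
      · have hzx : z ≤ ((w.reverse.count .A : ℤ) + w.reverse.count .b) * x := by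
          rw [hz']
          exact arith_aux x (Zr w.reverse) _ _ _ (Mr w.reverse) (-(mr w.reverse))
            hm0 hs0 hts (by omega) hMle hzb hsx
        rw [hqdef]
        apply Int.ceil_le.mpr
        rw [div_le_iff₀ hxQ]
        exact_mod_cast hzx
      · omega
    omega
  obtain ⟨W, hW, hWlen⟩ := hup
  have hmem : N.toNat ∈ {n | ∃ w : List XLetter, evalX w = hElt x y z ∧ w.length = n} :=
    ⟨W, hW, by omega⟩
  have hfinal : lenX (hElt x y z) = N.toNat := by
    unfold lenX
    exact le_antisymm (Nat.sInf_le hmem) (le_csInf ⟨_, hmem⟩ hlow)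
  rw [hfinal]
  omega
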